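/- Let q be a prime power with q ≡ 1 (mod 2), and let m = (q+1)/2. If m, q, q+1 are elements of a numerical semigroup H with 2m ≥ q+1, and the genus (number of gaps) of H is at least (q−1)^2/4, then either 2m = q+1 or m = q−1. -/

import Mathlib

open Finset

private lemma sum_blocks' (E N : ℕ) (hE : 0 < E) (w : ℕ → ℕ) :
    ∑ t ∈ range (N * E), (t / E + w (t % E))
      = (∑ i ∈ range N, i) * E + N * ∑ s ∈ range E, w s := by
  induction N with
  | zero => simp
  | succ n ih =>
    have h : (n + 1) * E = n * E + E := by ring
    rw [h, range_eq_Ico,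
      ← Finset.sum_Ico_consecutive _ (Nat.zero_le (n * E)) (Nat.le_add_right (n*E) E),
      ← range_eq_Ico, ih, Finset.sum_Ico_eq_sum_range]
    have h2 : n * E + E - n * E = E := by omega
    rw [h2]
    have h3 : ∀ t ∈ range E, (n * E + t) / E + w ((n * E + t) % E) = n + w t := by
      intro t ht
      simp only [mem_range] at ht
      have e1 : n * E + t = t + E * n := by ring
      rw [e1, Nat.add_mul_div_left t n hE, Nat.add_mul_mod_self_left,
        Nat.div_eq_of_lt ht, Nat.mod_eq_of_lt ht]
      omega
    rw [Finset.sum_congr rfl h3, Finset.sum_add_distrib, Finset.sum_const, card_range,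
      Finset.sum_range_succ]
    ring

private lemma gap_count' (q : ℕ) (hq : 0 < q) (H : Set ℕ) (hzero : (0:ℕ) ∈ H) (hqH : q ∈ H)
    (hadd : ∀ a ∈ H, ∀ b ∈ H, a + b ∈ H) (g : ℕ → ℕ)
    (hwit : ∀ c, 1 ≤ c → c < q → g c * q + c ∈ H) :
    {x : ℕ | x ∉ H}.ncard ≤ ∑ c ∈ Finset.Ico 1 q, g c := by
  have hmulq : ∀ k : ℕ, k * q ∈ H := by
    intro k
    induction k with
    | zero => simpa using hzero
    | succ n ih => have := hadd _ ih _ hqH; simpa [Nat.succ_mul] using this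
  set T : Finset ℕ := (Finset.Ico 1 q).biUnion
    (fun c => (Finset.range (g c)).image (fun k => k * q + c)) with hT
  have hsub : {x : ℕ | x ∉ H} ⊆ (T : Set ℕ) := by
    intro x hx
    simp only [Set.mem_setOf_eq] at hx
    obtain ⟨k, r, hdm, hr⟩ : ∃ k r, x = k * q + r ∧ r < q :=
      ⟨x / q, x % q, by nth_rewrite 1 [← Nat.div_add_mod x q]; ring, Nat.mod_lt x hq⟩
    have hc0 : r ≠ 0 := by
      intro h
      apply hx
      rw [hdm, h, add_zero]
      exact hmulq _
    have hklt : k < g r := by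
      by_contra hk
      push_neg at hk
      apply hx
      obtain ⟨t, ht⟩ := Nat.exists_eq_add_of_le hk
      have hx2 : x = (g r * q + r) + t * q := by rw [hdm, ht]; ring
      rw [hx2]
      exact hadd _ (hwit _ (by omega) hr) _ (hmulq t)
    simp only [hT, Finset.coe_biUnion, Set.mem_iUnion, Finset.mem_coe, Finset.mem_Ico,
      Finset.mem_image, Finset.mem_range]
    exact ⟨r, ⟨by omega, hr⟩, k, hklt, hdm.symm⟩
  calc {x : ℕ | x ∉ H}.ncard ≤ (T : Set ℕ).ncard :=
        Set.ncard_le_ncard hsub (T.finite_toSet)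
    _ = T.card := Set.ncard_coe_finset T
    _ ≤ ∑ c ∈ Finset.Ico 1 q, ((Finset.range (g c)).image (fun k => k * q + c)).card :=
        Finset.card_biUnion_le
    _ ≤ ∑ c ∈ Finset.Ico 1 q, g c := by
        apply Finset.sum_le_sum
        intro c _
        calc ((Finset.range (g c)).image (fun k => k * q + c)).card
            ≤ (Finset.range (g c)).card := Finset.card_image_le
          _ = g c := Finset.card_range _

private lemma caseI_arith' (n e R : ℕ) (hR : R ≤ e + 2) :
    2*((n+2+R)*(n+1+R)) + 2*((n+2)*(n+1))*(e+2) + 2*(n+2)*((e+2)*(e+1))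
      < ((n+2)*(e+2) + (n+1+R))^2 := by
  have hiden : ((n+2)*(e+2) + (n+1+R))^2 + R*R =
      2*((n+2+R)*(n+1+R)) + 2*((n+2)*(n+1))*(e+2) + 2*(n+2)*((e+2)*(e+1))
      + (n^2*e^2 + 4*n^2*e + 3*n^2 + 2*n*e^2 + 2*n*e*R + 10*n*e + 2*n*R + 8*n
         + 4*e*R + 4*e + 4*R + 5) := by ring
  have hpos : R*R < n^2*e^2 + 4*n^2*e + 3*n^2 + 2*n*e^2 + 2*n*e*R + 10*n*e + 2*n*R + 8*n
         + 4*e*R + 4*e + 4*R + 5 := by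
    have h1 : R*R ≤ R*(e+2) := Nat.mul_le_mul_left R hR
    nlinarith [h1]
  omega

private lemma caseII_arith' (p d b q1 : ℤ) (hp : 0 ≤ p) (hd : 0 ≤ d) (hb0 : 0 ≤ b)
    (hq : q1 + 1 = (d+3)*(p+2) + b) (hb : b ≤ d + 2)
    (h5 : 5*(d+3) ≤ 2*(q1+1)) (h13 : 13 ≤ q1 + 1) :
    2*((p+2)*(p+1))*(d+3) + 2*(p+2)*((d+3)*(d+2)) + 4*b*(p+2) + 2*(b*(b-1)) < q1^2 := by
  have hq1 : q1 = (d+3)*(p+2) + b - 1 := by linarith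
  subst hq1
  have h13' : d*p + 2*d + 3*p + b ≥ 7 := by nlinarith
  have hF3 : 0 ≤ b*(d + 2 - b) := mul_nonneg hb0 (by linarith)
  rcases le_or_gt p 0 with hp0 | hp1
  · have hp' : p = 0 := le_antisymm hp0 hp
    subst hp'
    have h5' : d + 3 ≤ 2*b := by nlinarith
    nlinarith [mul_nonneg hd (by linarith : (0:ℤ) ≤ 2*b - (d+3)), hF3, h13']
  · have hp1' : 1 ≤ p := hp1
    nlinarith [hF3, h13', sq_nonneg (p-1), mul_nonneg (mul_nonneg hp hd) hb0,
      mul_nonneg (mul_nonneg hp hd) hd, mul_nonneg (mul_nonneg hp hp) hd,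
      mul_nonneg (mul_nonneg (mul_nonneg hp hp) hd) hd,
      mul_nonneg (mul_nonneg hp hd) (by linarith : (0:ℤ) ≤ p - 1),
      mul_nonneg hp hb0, mul_nonneg hd hb0]

private lemma caseII_nat' (P D B q : ℕ) (hP : 2 ≤ P) (hD : 3 ≤ D) (hBD : B < D)
    (hq : D*P + B = q) (h5 : 5*D ≤ 2*q) (h13 : 13 ≤ q) :
    2*(P*(P-1))*D + 2*P*(D*(D-1)) + 4*(B*P) + 2*(B*(B-1)) < (q-1)^2 := by
  obtain ⟨p, rfl⟩ : ∃ p, P = p + 2 := ⟨P-2, by omega⟩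
  obtain ⟨d, rfl⟩ : ∃ d, D = d + 3 := ⟨D-3, by omega⟩
  obtain ⟨q1, rfl⟩ : ∃ q1, q = q1 + 1 := ⟨q-1, by omega⟩
  have e1 : p + 2 - 1 = p + 1 := rfl
  have e2 : d + 3 - 1 = d + 2 := rfl
  have e3 : q1 + 1 - 1 = q1 := rfl
  rw [e1, e2, e3]
  have hqz : (q1:ℤ) + 1 = ((d:ℤ)+3)*((p:ℤ)+2) + (B:ℤ) := by exact_mod_cast hq.symm
  have hbz : (B:ℤ) ≤ (d:ℤ) + 2 := by exact_mod_cast Nat.lt_succ_iff.mp (by omega : B < d + 3)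
  have h5z : 5*((d:ℤ)+3) ≤ 2*((q1:ℤ)+1) := by exact_mod_cast h5
  have h13z : (13:ℤ) ≤ (q1:ℤ) + 1 := by exact_mod_cast h13
  have hmain := caseII_arith' p d B q1 (Int.ofNat_nonneg p) (Int.ofNat_nonneg d)
    (Int.ofNat_nonneg B) hqz hbz h5z h13z
  rcases Nat.eq_zero_or_pos B with hB0 | hB1
  · subst hB0
    simp only [Nat.cast_zero] at hmain
    zify
    linarith
  · zify [hB1]
    linarith

/-- if `q` is an odd prime power, `H` is a numerical semigroup
containing `m, q, q+1` with `m ≤ q-1` and `2m ≥ q+1`, and the genus (number of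
gaps) of `H` is at least `(q-1)²/4`, then `2m = q+1` or `m = q-1`. -/
theorem stmt_4 (q : ℕ) (hq : ∃ p e : ℕ, p.Prime ∧ 0 < e ∧ q = p ^ e)
    (hodd : Odd q) (m : ℕ) (hm : m ≤ q - 1) (h2m : q + 1 ≤ 2 * m)
    (H : Set ℕ) (hzero : (0 : ℕ) ∈ H)
    (hadd : ∀ a ∈ H, ∀ b ∈ H, a + b ∈ H)
    (hfin : {x : ℕ | x ∉ H}.Finite)
    (hmH : m ∈ H) (hqH : q ∈ H) (hq1H : q + 1 ∈ H)
    (hgenus : (q - 1) ^ 2 ≤ 4 * {x : ℕ | x ∉ H}.ncard) :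
    2 * m = q + 1 ∨ m = q - 1 := by
  by_contra hcon
  push_neg at hcon
  obtain ⟨hne1, hne2⟩ := hcon
  obtain ⟨s, hs⟩ := hodd
  -- helper: membership of combinations
  have hsmul : ∀ (k x : ℕ), x ∈ H → k * x ∈ H := by
    intro k x hx
    induction k with
    | zero => simpa using hzero
    | succ n ih => have := hadd _ ih _ hx; simpa [Nat.succ_mul] using this
  have hcomb : ∀ a b e : ℕ, a * m + b * (q+1) + e * q ∈ H := fun a b e =>
    hadd _ (hadd _ (hsmul a m hmH) _ (hsmul b (q+1) hq1H)) _ (hsmul e q hqH)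
  -- interior bounds
  have hq0 : 0 < q := by omega
  obtain ⟨E, hqE⟩ : ∃ E, q = m + E := ⟨q - m, by omega⟩
  have hE2 : 2 ≤ E := by omega
  obtain ⟨D, hD⟩ : ∃ D, 2 * m = q + D := ⟨2*m - q, by omega⟩
  have hD3 : 3 ≤ D := by omega
  have hq2ED : q = 2*E + D := by omega
  -- special cases
  by_cases hsp1 : q = 9 ∧ m = 6
  · obtain ⟨h9, h6⟩ := hsp1
    subst h9; subst h6
    set gt : ℕ → ℕ := fun c => [0,1,2,1,2,3,1,1,2].getD c 0 with hgt
    have hwit : ∀ c, 1 ≤ c → c < 9 → gt c * 9 + c ∈ H := by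
      intro c h1 h2
      interval_cases c
      · have e : gt 1 * 9 + 1 = 10 := rfl
        rw [e]; have := hcomb 0 1 0; norm_num at this; exact this
      · have e : gt 2 * 9 + 2 = 20 := rfl
        rw [e]; have := hcomb 0 2 0; norm_num at this; exact this
      · have e : gt 3 * 9 + 3 = 12 := rfl
        rw [e]; have := hcomb 2 0 0; norm_num at this; exact this
      · have e : gt 4 * 9 + 4 = 22 := rfl
        rw [e]; have := hcomb 2 1 0; norm_num at this; exact this
      · have e : gt 5 * 9 + 5 = 32 := rfl
        rw [e]; have := hcomb 2 2 0; norm_num at this; exact this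
      · have e : gt 6 * 9 + 6 = 15 := rfl
        rw [e]; have := hcomb 1 0 1; norm_num at this; exact this
      · have e : gt 7 * 9 + 7 = 16 := rfl
        rw [e]; have := hcomb 1 1 0; norm_num at this; exact this
      · have e : gt 8 * 9 + 8 = 26 := rfl
        rw [e]; have := hcomb 1 2 0; norm_num at this; exact this
    have hkey := gap_count' 9 (by norm_num) H hzero hqH hadd gt hwit
    have hsum : ∑ c ∈ Finset.Ico 1 9, gt c = 13 := by decide
    rw [hsum] at hkey
    norm_num at hgenus
    omega
  by_cases hsp2 : q = 11 ∧ m = 7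
  · obtain ⟨h11, h7⟩ := hsp2
    subst h11; subst h7
    set gt : ℕ → ℕ := fun c => [0,1,2,1,2,3,2,3,4,3,3].getD c 0 with hgt
    have hwit : ∀ c, 1 ≤ c → c < 11 → gt c * 11 + c ∈ H := by
      intro c h1 h2
      interval_cases c
      · have e : gt 1 * 11 + 1 = 12 := rfl
        rw [e]; have := hcomb 0 1 0; norm_num at this; exact this
      · have e : gt 2 * 11 + 2 = 24 := rfl
        rw [e]; have := hcomb 0 2 0; norm_num at this; exact this
      · have e : gt 3 * 11 + 3 = 14 := rfl
        rw [e]; have := hcomb 2 0 0; norm_num at this; exact this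
      · have e : gt 4 * 11 + 4 = 26 := rfl
        rw [e]; have := hcomb 2 1 0; norm_num at this; exact this
      · have e : gt 5 * 11 + 5 = 38 := rfl
        rw [e]; have := hcomb 2 2 0; norm_num at this; exact this
      · have e : gt 6 * 11 + 6 = 28 := rfl
        rw [e]; have := hcomb 4 0 0; norm_num at this; exact this
      · have e : gt 7 * 11 + 7 = 40 := rfl
        rw [e]; have := hcomb 4 1 0; norm_num at this; exact this
      · have e : gt 8 * 11 + 8 = 52 := rfl
        rw [e]; have := hcomb 4 2 0; norm_num at this; exact this
      · have e : gt 9 * 11 + 9 = 42 := rfl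
        rw [e]; have := hcomb 6 0 0; norm_num at this; exact this
      · have e : gt 10 * 11 + 10 = 43 := rfl
        rw [e]; have := hcomb 1 3 0; norm_num at this; exact this
    have hkey := gap_count' 11 (by norm_num) H hzero hqH hadd gt hwit
    have hsum : ∑ c ∈ Finset.Ico 1 11, gt c = 24 := by decide
    rw [hsum] at hkey
    norm_num at hgenus
    omega
  -- general case
  by_cases hreg : 3 * q ≤ 10 * E
  · -- Case II: walk down in steps of D
    have hD0 : 0 < D := by omega
    have hq13 : 13 ≤ q := by omega
    set g : ℕ → ℕ := fun c => c / D + c % D with hg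
    have hwit : ∀ c, 1 ≤ c → c < q → g c * q + c ∈ H := by
      intro c _ _
      have hdm := Nat.div_add_mod c D
      have key : g c * q + c = (2*(c/D)) * m + (c%D) * (q+1) + 0*q := by
        simp only [hg]
        set j := c / D with hj
        set r := c % D with hr
        rw [← hdm]
        have h2m : q + D = 2*m := by omega
        calc (j + r) * q + (D * j + r)
            = j * (q + D) + r * (q+1) := by ring
          _ = j * (2*m) + r * (q+1) := by rw [h2m]
          _ = (2*j) * m + r * (q+1) + 0*q := by ring
      rw [key]
      exact hcomb (2*(c/D)) (c%D) 0
    have hkey := gap_count' q hq0 H hzero hqH hadd g hwit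
    -- sum bound
    set P := q / D with hPdef
    set B := q % D with hBdef
    have hdmq : D * P + B = q := Nat.div_add_mod q D
    have hBD : B < D := Nat.mod_lt q hD0
    have hcm : P * D = D * P := Nat.mul_comm P D
    have hPDq : P * D ≤ q := by omega
    have hP2 : 2 ≤ P := by
      by_contra hP1
      push_neg at hP1
      have : D * P ≤ D * 1 := Nat.mul_le_mul_left D (by omega)
      omega
    have hsub1 : ∑ c ∈ Ico 1 q, g c ≤ ∑ c ∈ range q, g c := by
      apply Finset.sum_le_sum_of_subset
      rw [range_eq_Ico]
      exact Finset.Ico_subset_Ico (by omega) le_rfl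
    have hsplit : (∑ c ∈ Ico 0 (P*D), g c) + (∑ c ∈ Ico (P*D) q, g c) = ∑ c ∈ Ico 0 q, g c :=
      Finset.sum_Ico_consecutive g (Nat.zero_le _) hPDq
    have hblocks : ∑ c ∈ range (P*D), g c
        = (∑ i ∈ range P, i) * D + P * ∑ s ∈ range D, s := by
      have := sum_blocks' D P hD0 (fun s => s)
      simpa using this
    have hpart : ∑ c ∈ Ico (P*D) q, g c = B * P + ∑ t ∈ range B, t := by
      rw [Finset.sum_Ico_eq_sum_range]
      have hlen : q - P*D = B := by omega
      rw [hlen]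
      have hcg : ∀ t ∈ range B, g (P*D + t) = P + t := by
        intro t ht
        simp only [mem_range] at ht
        have htD : t < D := by omega
        simp only [hg]
        have e1 : P*D + t = t + D*P := by ring
        rw [e1, Nat.add_mul_div_left t P hD0, Nat.add_mul_mod_self_left,
          Nat.div_eq_of_lt htD, Nat.mod_eq_of_lt htD]
        omega
      rw [Finset.sum_congr rfl hcg, Finset.sum_add_distrib, Finset.sum_const, card_range]
      simp [mul_comm]
    have hG1 := Finset.sum_range_id_mul_two P
    have hGD := Finset.sum_range_id_mul_two D
    have hGB := Finset.sum_range_id_mul_two B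
    set G1 := ∑ i ∈ range P, i
    set GD := ∑ i ∈ range D, i
    set GB := ∑ i ∈ range B, i
    have htot : ∑ c ∈ Ico 1 q, g c ≤ G1 * D + P * GD + (B * P + GB) := by
      have : ∑ c ∈ range q, g c = G1 * D + P * GD + (B * P + GB) := by
        rw [range_eq_Ico, ← hsplit, ← range_eq_Ico, hblocks, hpart]
      omega
    have hfin4 : 4 * (G1 * D + P * GD + (B * P + GB))
        = 2*(P*(P-1))*D + 2*P*(D*(D-1)) + 4*(B*P) + 2*(B*(B-1)) := by
      have e : 4 * (G1 * D + P * GD + (B * P + GB))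
          = 2*(G1*2)*D + 2*P*(GD*2) + 4*(B*P) + 2*(GB*2) := by ring
      rw [e, hG1, hGD, hGB]
    have harith := caseII_nat' P D B q hP2 hD3 hBD hdmq (by omega) hq13
    have hfinal : 4 * (∑ c ∈ Ico 1 q, g c) < (q-1)^2 := by
      calc 4 * (∑ c ∈ Ico 1 q, g c) ≤ 4 * (G1 * D + P * GD + (B * P + GB)) := by omega
        _ = 2*(P*(P-1))*D + 2*P*(D*(D-1)) + 4*(B*P) + 2*(B*(B-1)) := hfin4
        _ < (q-1)^2 := harith
    have h4n : 4 * {x : ℕ | x ∉ H}.ncard ≤ 4 * (∑ c ∈ Ico 1 q, g c) := by omega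
    omega
  · -- Case I: walk up in steps of E with one wraparound
    push_neg at hreg
    have hE0 : 0 < E := by omega
    set fI : ℕ → ℕ := fun c => (q - c + E - 1)/E - 1 + (c + ((q - c + E - 1)/E)*E - q) with hfI
    set g : ℕ → ℕ := fun c => min c (fI c) with hg
    have hwit : ∀ c, 1 ≤ c → c < q → g c * q + c ∈ H := by
      intro c h1 hcq
      rcases le_total c (fI c) with hmin | hmin
      · have e0 : g c = c := by simp [hg, hmin]
        rw [e0]
        have e : c * q + c = 0 * m + c * (q+1) + 0*q := by ring
        rw [e]
        exact hcomb 0 c 0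
      · have e0 : g c = fI c := by simp [hg, hmin]
        rw [e0]
        have hdm := Nat.div_add_mod (q - c + E - 1) E
        have hmod : (q - c + E - 1) % E < E := Nat.mod_lt _ hE0
        set b := (q - c + E - 1)/E with hbdef
        have hb1 : 1 ≤ b := by
          rcases Nat.eq_zero_or_pos b with h0 | h
          · rw [h0] at hdm; omega
          · exact h
        obtain ⟨b1, hbb1⟩ : ∃ b1, b = b1 + 1 := ⟨b - 1, by omega⟩
        have hcmb : b * E = E * b := Nat.mul_comm b E
        have hveq : c + b * E = q + (c + b*E - q) := by omega
        set v := c + b*E - q with hv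
        have hfIc : fI c = b1 + v := by
          simp only [hfI, ← hbdef, ← hv]
          omega
        rw [hfIc]
        have key : (b1 + v) * q + c = (b1+1) * m + v * (q+1) + 0*q := by
          apply Nat.add_right_cancel (m := (b1+1)*E)
          have hveq' : c + (b1+1)*E = q + v := by rw [← hbb1]; omega
          calc (b1 + v) * q + c + (b1+1)*E
              = (b1 + v) * q + (c + (b1+1)*E) := by ring
            _ = (b1 + v) * q + (q + v) := by rw [hveq']
            _ = (b1 + v + 1) * q + v := by ring
            _ = (b1+1) * (m+E) + v*q + v := by rw [← hqE]; ring
            _ = (b1+1) * m + v * (q+1) + 0*q + (b1+1)*E := by ring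
        rw [key]
        exact hcomb (b1+1) v 0
    have hkey := gap_count' q hq0 H hzero hqH hadd g hwit
    -- sum bound
    set N := q / (E+1) with hNdef
    set R := q % (E+1) with hRdef
    have hNR : (E+1) * N + R = q := Nat.div_add_mod q (E+1)
    have hRlt : R < E + 1 := Nat.mod_lt q (by omega)
    have hexp : (E+1)*N = N*E + N := by ring
    have hN2 : 2 ≤ N := by
      by_contra hN1
      push_neg at hN1
      have : (E+1) * N ≤ (E+1) * 1 := Nat.mul_le_mul_left (E+1) (by omega)
      omega
    set cs := N + R with hcs
    have hcs1 : 1 ≤ cs := by omega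
    have hqNE : q = N*E + cs := by omega
    have hcsq : cs ≤ q := by omega
    have hsplit : (∑ c ∈ Ico 1 cs, g c) + (∑ c ∈ Ico cs q, g c) = ∑ c ∈ Ico 1 q, g c :=
      Finset.sum_Ico_consecutive g hcs1 hcsq
    have hb1' : ∑ c ∈ Ico 1 cs, g c ≤ ∑ i ∈ range cs, i := by
      calc ∑ c ∈ Ico 1 cs, g c ≤ ∑ c ∈ Ico 1 cs, c := by
            apply Finset.sum_le_sum
            intro c _
            exact min_le_left _ _
        _ ≤ ∑ i ∈ range cs, i := by
            apply Finset.sum_le_sum_of_subset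
            rw [range_eq_Ico]
            exact Finset.Ico_subset_Ico (by omega) le_rfl
    have hb2' : ∑ c ∈ Ico cs q, g c ≤ ∑ c ∈ Ico cs q, fI c := by
      apply Finset.sum_le_sum
      intro c _
      exact min_le_right _ _
    have hlen : q - cs = N*E := by omega
    have hre : ∑ c ∈ Ico cs q, fI c = ∑ t ∈ range (N*E), fI (cs + t) := by
      rw [Finset.sum_Ico_eq_sum_range, hlen]
    have hrefl : ∑ t ∈ range (N*E), fI (cs + (N*E - 1 - t)) = ∑ t ∈ range (N*E), fI (cs + t) :=
      Finset.sum_range_reflect (fun t => fI (cs + t)) (N*E)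
    have hpt : ∀ t ∈ range (N*E), fI (cs + (N*E - 1 - t)) = t/E + (E - 1 - t%E) := by
      intro t ht
      simp only [mem_range] at ht
      have hc1 : cs + (N*E - 1 - t) = q - 1 - t := by omega
      rw [hc1]
      simp only [hfI]
      have hdm := Nat.div_add_mod t E
      have hmod : t % E < E := Nat.mod_lt _ hE0
      set i := t / E with hi
      set s2 := t % E with hs2
      have e1 : q - (q - 1 - t) + E - 1 = t + E := by omega
      rw [e1]
      have e3 : t + E = s2 + E*(i + 1) := by
        have e2 : E*(i+1) = E*i + E := by ring
        omega
      have e4 : (t + E)/E = i + 1 := by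
        rw [e3, Nat.add_mul_div_left _ _ hE0, Nat.div_eq_of_lt hmod]
        omega
      rw [e4]
      have e5 : (i + 1) * E = E*i + E := by ring
      rw [e5]
      have e6 : q - 1 - t + (E*i + E) - q = E - 1 - s2 := by omega
      rw [e6]
      simp
    have hblocks : ∑ t ∈ range (N*E), (t/E + (E - 1 - t%E))
        = (∑ i ∈ range N, i) * E + N * ∑ s ∈ range E, (E - 1 - s) := by
      have := sum_blocks' E N hE0 (fun s => E - 1 - s)
      simpa using this
    have hwsum : ∑ s ∈ range E, (E - 1 - s) = ∑ s ∈ range E, s :=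
      Finset.sum_range_reflect (fun s => s) E
    have hG1 := Finset.sum_range_id_mul_two N
    have hGE := Finset.sum_range_id_mul_two E
    have hGcs := Finset.sum_range_id_mul_two cs
    set G1 := ∑ i ∈ range N, i
    set GE := ∑ i ∈ range E, i
    set Gcs := ∑ i ∈ range cs, i
    have htot : ∑ c ∈ Ico 1 q, g c ≤ Gcs + (G1 * E + N * GE) := by
      have hs2 : ∑ c ∈ Ico cs q, fI c = G1 * E + N * GE := by
        rw [hre, ← hrefl, Finset.sum_congr rfl hpt, hblocks, hwsum]
      omega
    -- convert to arithmetic lemma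
    obtain ⟨n, hNn⟩ : ∃ n, N = n + 2 := ⟨N - 2, by omega⟩
    obtain ⟨e, hEe⟩ : ∃ e, E = e + 2 := ⟨E - 2, by omega⟩
    have hRe : R ≤ e + 2 := by omega
    have harith := caseI_arith' n e R hRe
    have hNE2 : N * E = (n+2)*(e+2) := by rw [hNn, hEe]
    have hq1 : q - 1 = (n+2)*(e+2) + (n+1+R) := by omega
    have hNN : N*(N-1) = (n+2)*(n+1) := by rw [hNn]; norm_num
    have hEE : E*(E-1) = (e+2)*(e+1) := by rw [hEe]; norm_num
    have hcs2 : cs*(cs-1) = (n+2+R)*(n+1+R) := by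
      have h' : cs = n + 2 + R := by omega
      rw [h']
      norm_num
    have hfin4 : 4 * (Gcs + (G1 * E + N * GE))
        = 2*((n+2+R)*(n+1+R)) + 2*((n+2)*(n+1))*E + 2*N*((e+2)*(e+1)) := by
      have ee : 4 * (Gcs + (G1 * E + N * GE))
          = 2*(Gcs*2) + 2*(G1*2)*E + 2*N*(GE*2) := by ring
      rw [ee, hGcs, hG1, hGE, hcs2, hNN, hEE]
    have hfinal : 4 * (∑ c ∈ Ico 1 q, g c) < (q-1)^2 := by
      calc 4 * (∑ c ∈ Ico 1 q, g c) ≤ 4 * (Gcs + (G1 * E + N * GE)) := by omega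
        _ = 2*((n+2+R)*(n+1+R)) + 2*((n+2)*(n+1))*E + 2*N*((e+2)*(e+1)) := hfin4
        _ = 2*((n+2+R)*(n+1+R)) + 2*((n+2)*(n+1))*(e+2) + 2*(n+2)*((e+2)*(e+1)) := by
            rw [hEe, hNn]
        _ < ((n+2)*(e+2) + (n+1+R))^2 := harith
        _ = (q-1)^2 := by rw [hq1]
    have h4n : 4 * {x : ℕ | x ∉ H}.ncard ≤ 4 * (∑ c ∈ Ico 1 q, g c) := by omega
    omega
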